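/- Let G be a d-VASS and Λ = α₀β₁⁺α₁⋯βₖ⁺αₖ a positive linear path scheme from state p to q compatible to G. For all u, v ∈ ℕ^d and e ∈ ℕ^k with e(i) ≥ 1 for all i: if the triple (u, e, v) satisfies the characteristic system E_LPS(Λ), then p(u) →^{α₀β₁^{e(1)}α₁⋯βₖ^{e(k)}αₖ} q(v) under ℕ^d-semantics, i.e., the run from u along the path α₀β₁^{e(1)}⋯αₖ stays componentwise nonnegative and ends at v. -/

import Mathlib

/-- The effect of a word of vectors in `ℤ^d`: the componentwise sum. -/
def eff {d : ℕ} (L : List (Fin d → ℤ)) : Fin d → ℤ := L.sum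

/-- The action word `α₀ β₁^{e₁} α₁ ⋯ β_k^{e_k} α_k` of a linear path scheme
with paths `α i` (for `i : Fin (k+1)`), cycles `β i` (for `i : Fin k`, `β i`
being the cycle between `α i` and `α (i+1)`), and exponents `e`. -/
def lpsWord {d k : ℕ} (α : Fin (k + 1) → List (Fin d → ℤ))
    (β : Fin k → List (Fin d → ℤ)) (e : Fin k → ℕ) : List (Fin d → ℤ) :=
  α 0 ++ (List.ofFn fun i : Fin k =>
    (List.replicate (e i) (β i)).flatten ++ α i.succ).flatten

/-- The effect of the part of the scheme word strictly before `α i`,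
i.e. of `α₀ β₁^{e₁} α₁ ⋯ α_{i-1} β_i^{e_i}`. -/
def prefEff {d k : ℕ} (α : Fin (k + 1) → List (Fin d → ℤ))
    (β : Fin k → List (Fin d → ℤ)) (e : Fin k → ℕ) (i : Fin (k + 1)) : Fin d → ℤ :=
  ∑ j : Fin k, if (j : ℕ) < (i : ℕ) then eff (α j.castSucc) + (e j) • eff (β j) else 0

/-- `NReach u W v`: the word `W`, fired from the nonnegative vector `u`, keeps
all intermediate vectors componentwise nonnegative and ends at `v`
(`ℕ^d`-semantics of a run along `W`). -/
def NReach {d : ℕ} (u : Fin d → ℤ) (W : List (Fin d → ℤ)) (v : Fin d → ℤ) : Prop :=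
  (∀ m, ∀ x, 0 ≤ u x + eff (W.take m) x) ∧ (∀ x, u x + eff W x = v x)

lemma eff_append {d : ℕ} (A B : List (Fin d → ℤ)) : eff (A ++ B) = eff A + eff B :=
  List.sum_append

lemma NReach_append {d : ℕ} {u w v : Fin d → ℤ} {A B : List (Fin d → ℤ)}
    (h1 : NReach u A w) (h2 : NReach w B v) : NReach u (A ++ B) v := by
  obtain ⟨h1p, h1e⟩ := h1; obtain ⟨h2p, h2e⟩ := h2
  constructor
  · intro m x
    by_cases hm : m ≤ A.length
    · rw [List.take_append_of_le_length hm]; exact h1p m x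
    · rw [List.take_append, List.take_of_length_le (by omega), eff_append]
      have h := h2p (m - A.length) x
      have he := h1e x
      simp only [Pi.add_apply]
      linarith
  · intro x
    rw [eff_append]
    simp only [Pi.add_apply]
    linarith [h1e x, h2e x]

lemma NReach_end_nonneg {d : ℕ} {u v : Fin d → ℤ} {W : List (Fin d → ℤ)}
    (h : NReach u W v) : ∀ x, 0 ≤ v x := by
  intro x
  have h1 := h.1 W.length x
  rw [List.take_length] at h1
  rw [← h.2 x]; exact h1

lemma nreach_of_prefixes {d : ℕ} (p q : Fin d → ℤ) (L : List (Fin d → ℤ))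
    (h0 : ∀ x, 0 ≤ p x)
    (hj : ∀ j, 1 ≤ j → j ≤ L.length → ∀ x, 0 ≤ p x + eff (L.take j) x)
    (hend : ∀ x, p x + eff L x = q x) : NReach p L q := by
  refine ⟨?_, hend⟩
  intro m x
  rcases Nat.eq_zero_or_pos m with h | h
  · subst h; simpa [eff] using h0 x
  by_cases hm : m ≤ L.length
  · exact hj m h hm x
  · rw [List.take_of_length_le (by omega)]
    rcases Nat.eq_zero_or_pos L.length with h' | h'
    · have : L = [] := List.length_eq_zero_iff.mp h'
      subst this; simpa [eff] using h0 x
    · have := hj L.length h' le_rfl x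
      rwa [List.take_length] at this

lemma NReach_chain {d : ℕ} : ∀ {k : ℕ} (f : Fin k → List (Fin d → ℤ))
    (w : Fin (k + 1) → Fin d → ℤ),
    (∀ i : Fin k, (∀ x, 0 ≤ w i.castSucc x) → NReach (w i.castSucc) (f i) (w i.succ)) →
    (∀ x, 0 ≤ w 0 x) →
    NReach (w 0) (List.ofFn f).flatten (w (Fin.last k)) := by
  intro k
  induction k with
  | zero =>
    intro f w _ h0
    refine ⟨?_, ?_⟩ <;> intro m <;> try intro x
    · simpa [eff] using h0 _
    all_goals simp [eff]
  | succ k ih =>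
    intro f w h h0
    have hstep : NReach (w 0) (f 0) (w (Fin.succ 0)) := by
      have := h 0 (by simpa using h0)
      simpa using this
    have h0' : ∀ x, 0 ≤ w (Fin.succ 0) x := NReach_end_nonneg hstep
    have hrest := ih (fun i => f i.succ) (fun i => w i.succ)
      (fun i hi => by
        have := h i.succ (by exact hi)
        exact this) h0'
    have := NReach_append hstep hrest
    rw [List.ofFn_succ, List.flatten_cons] at *
    simpa [Fin.succ_last] using this

lemma convex_int (p b c n l : ℤ) (h0l : 0 ≤ l) (hln : l ≤ n)
    (hA : 0 ≤ p + c) (hB : 0 ≤ p + n * b + c) : 0 ≤ p + l * b + c := by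
  rcases le_or_gt 0 b with hb | hb
  · nlinarith [mul_nonneg h0l hb]
  · nlinarith [mul_nonneg (sub_nonneg.mpr hln) (neg_nonneg.mpr hb.le)]

lemma prefEff_zero_apply {d k : ℕ} (α : Fin (k + 1) → List (Fin d → ℤ))
    (β : Fin k → List (Fin d → ℤ)) (e : Fin k → ℕ) (x : Fin d) :
    prefEff α β e 0 x = 0 := by
  simp [prefEff]

lemma prefEff_succ_apply {d k : ℕ} (α : Fin (k + 1) → List (Fin d → ℤ))
    (β : Fin k → List (Fin d → ℤ)) (e : Fin k → ℕ) (i : Fin k) (x : Fin d) :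
    prefEff α β e i.succ x = prefEff α β e i.castSucc x
      + eff (α i.castSucc) x + (e i) • eff (β i) x := by
  simp only [prefEff, Finset.sum_apply, ite_apply, Pi.add_apply, Pi.smul_apply,
    Pi.zero_apply, Fin.val_succ, Fin.coe_castSucc]
  have key : ∀ j : Fin k,
      (if (j : ℕ) < (i : ℕ) + 1 then eff (α j.castSucc) x + (e j) • eff (β j) x else 0)
      = (if (j : ℕ) < (i : ℕ) then eff (α j.castSucc) x + (e j) • eff (β j) x else 0)
      + (if j = i then eff (α j.castSucc) x + (e j) • eff (β j) x else 0) := by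
    intro j
    rcases lt_trichotomy (j : ℕ) (i : ℕ) with h | h | h
    · have hne : j ≠ i := fun hh => absurd (congrArg Fin.val hh) (by omega)
      simp [h, Nat.lt_succ_of_lt h, hne]
    · have hji : j = i := Fin.ext h
      subst hji
      simp [h]
    · have h1 : ¬ (j : ℕ) < (i : ℕ) + 1 := by omega
      have h2 : ¬ (j : ℕ) < (i : ℕ) := by omega
      have hne : j ≠ i := fun hh => absurd (congrArg Fin.val hh) (by omega)
      simp [h1, h2, hne]
  rw [Finset.sum_congr rfl (fun j _ => key j), Finset.sum_add_distrib,
    Finset.sum_ite_eq' Finset.univ i]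
  simp
  ring

/-- If `(u, e, v)` satisfies the characteristic system `E_LPS(Λ)` of the
positive linear path scheme `Λ = α₀β₁⁺α₁⋯βₖ⁺αₖ`, then the run from `u` along
`α₀β₁^{e(1)}⋯βₖ^{e(k)}αₖ` stays componentwise nonnegative and ends at `v`. -/
theorem stmt13 {d k : ℕ} (α : Fin (k + 1) → List (Fin d → ℤ))
    (β : Fin k → List (Fin d → ℤ)) (e : Fin k → ℕ) (u v : Fin d → ℤ)
    (hu : ∀ x, 0 ≤ u x) (hv : ∀ x, 0 ≤ v x)
    -- condition (1): each cycle is taken at least once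
    (he : ∀ i, 1 ≤ e i)
    -- condition (2): nonnegativity at every prefix of each `α i`
    (h2 : ∀ (i : Fin (k + 1)) (j : ℕ), 1 ≤ j → j ≤ (α i).length →
      ∀ x, 0 ≤ u x + prefEff α β e i x + eff ((α i).take j) x)
    -- condition (3): nonnegativity at every prefix of the first copy of `β i`…
    (h3a : ∀ (i : Fin k) (j : ℕ), 1 ≤ j → j ≤ (β i).length →
      ∀ x, 0 ≤ u x + prefEff α β e i.castSucc x + eff (α i.castSucc) x +
        eff ((β i).take j) x)
    -- …and of the last copy of `β i`
    (h3b : ∀ (i : Fin k) (j : ℕ), 1 ≤ j → j ≤ (β i).length →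
      ∀ x, 0 ≤ u x + prefEff α β e i.castSucc x + eff (α i.castSucc) x +
        (e i - 1) • eff (β i) x + eff ((β i).take j) x)
    -- condition (4): total effect
    (h4 : ∀ x, u x + eff (lpsWord α β e) x = v x) :
    NReach u (lpsWord α β e) v := by
  classical
  -- chain points: after `α i`
  set w : Fin (k + 1) → Fin d → ℤ :=
    fun i x => u x + prefEff α β e i x + eff (α i) x with hw
  -- Step 1: along α 0
  have step1 : NReach u (α 0) (w 0) := by
    refine nreach_of_prefixes u (w 0) (α 0) hu ?_ ?_
    · intro j hj1 hj2 x
      have := h2 0 j hj1 hj2 x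
      rw [prefEff_zero_apply] at this
      linarith
    · intro x
      simp only [hw, prefEff_zero_apply]
      ring
  -- each middle segment
  have hseg : ∀ i : Fin k, (∀ x, 0 ≤ w i.castSucc x) →
      NReach (w i.castSucc) ((List.replicate (e i) (β i)).flatten ++ α i.succ) (w i.succ) := by
    intro i hstart
    set mi : Fin d → ℤ := fun x => w i.castSucc x + (e i) • eff (β i) x with hmi
    have partA : NReach (w i.castSucc) (List.replicate (e i) (β i)).flatten mi := by
      have chainA := NReach_chain (fun _ : Fin (e i) => β i)
        (fun ℓ x => w i.castSucc x + (ℓ : ℕ) • eff (β i) x) ?_ ?_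
      · rw [List.ofFn_const] at chainA
        have h1 : (fun x => w i.castSucc x + ((0 : Fin (e i + 1)) : ℕ) • eff (β i) x)
            = w i.castSucc := by funext x; simp
        have h2' : (fun x => w i.castSucc x + ((Fin.last (e i)) : ℕ) • eff (β i) x) = mi := by
          funext x; simp [hmi]
        rwa [h1, h2'] at chainA
      · intro ℓ hs
        refine nreach_of_prefixes _ _ (β i) hs ?_ ?_
        · intro j hj1 hj2 x
          show 0 ≤ w i.castSucc x + ((ℓ.castSucc : ℕ)) • eff (β i) x + eff ((β i).take j) x
          have hA := h3a i j hj1 hj2 x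
          have hB := h3b i j hj1 hj2 x
          simp only [nsmul_eq_mul] at hB ⊢
          rw [Nat.cast_sub (he i)] at hB
          have hl : ((ℓ.castSucc : ℕ) : ℤ) ≤ (e i : ℤ) - 1 := by
            have := ℓ.isLt
            simp only [Fin.coe_castSucc]
            omega
          have := convex_int (u x + prefEff α β e i.castSucc x + eff (α i.castSucc) x)
            (eff (β i) x) (eff ((β i).take j) x) ((e i : ℤ) - 1) ((ℓ.castSucc : ℕ) : ℤ)
            (by positivity) hl hA (by push_cast at hB ⊢; linarith)
          simp only [hw]
          push_cast at this ⊢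
          linarith
        · intro x
          show w i.castSucc x + ((ℓ.castSucc : ℕ)) • eff (β i) x + eff (β i) x
            = w i.castSucc x + ((ℓ.succ : ℕ)) • eff (β i) x
          simp only [Fin.coe_castSucc, Fin.val_succ, succ_nsmul]
          ring
      · intro x
        show 0 ≤ w i.castSucc x + ((0 : Fin (e i + 1)) : ℕ) • eff (β i) x
        simpa using hstart x
    have hmi_eq : ∀ x, mi x = u x + prefEff α β e i.succ x := by
      intro x
      simp only [hmi, hw, prefEff_succ_apply]
      ring
    have partB : NReach mi (α i.succ) (w i.succ) := by
      refine nreach_of_prefixes mi (w i.succ) (α i.succ) (NReach_end_nonneg partA) ?_ ?_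
      · intro j hj1 hj2 x
        have := h2 i.succ j hj1 hj2 x
        rw [hmi_eq x]
        linarith
      · intro x
        rw [hmi_eq x]
    exact NReach_append partA partB
  have chain := NReach_chain _ w hseg (NReach_end_nonneg step1)
  have total := NReach_append step1 chain
  exact ⟨total.1, h4⟩
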